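/- The Dyck language of balanced parenthesis strings over the two-letter alphabet {[, ]} (all words w such that every prefix of w contains at least as many ['s as ]'s and w contains equally many ['s and ]'s) is not counting-regular: its counting function, which equals the n-th Catalan number at length 2n and 0 at odd lengths, is not the counting function of any regular language. -/

import Mathlib

/-- The counting function of a language: the number of words of length `n`. -/
noncomputable def countFn {α : Type*} (L : Set (List α)) (n : ℕ) : ℕ :=
  Set.ncard {w | w ∈ L ∧ w.length = n}

/-- A language is regular if it is accepted by a DFA with finitely many states. -/
def IsRegularLang {α : Type*} (L : Set (List α)) : Prop :=
  ∃ (σ : Type) (_ : Fintype σ) (M : DFA α σ), ∀ w, w ∈ M.accepts ↔ w ∈ L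

/-- A language is counting-regular if some regular language over a (possibly different)
finite alphabet has the same counting function. -/
def CountingRegular {α : Type*} (L : Set (List α)) : Prop :=
  ∃ (β : Type) (_ : Fintype β) (L' : Set (List β)),
    IsRegularLang L' ∧ ∀ n, countFn L' n = countFn L n


/-- The Dyck language of balanced parenthesis strings over `{[, ]}` (here `[ = 0`, `] = 1`). -/
def Dyck : Set (List (Fin 2)) :=
  {w | (∀ p, p <+: w → p.count 1 ≤ p.count 0) ∧ w.count 0 = w.count 1}


open Finset

lemma zmod2_mul_self : ∀ x : ZMod 2, x * x = x := by decide

lemma cat_cast_succ (n : ℕ) :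
    (catalan (n + 1) : ZMod 2) = if n % 2 = 0 then (catalan (n / 2) : ZMod 2) else 0 := by
  have h : (catalan (n + 1) : ZMod 2)
      = ∑ i ∈ range (n + 1), (catalan i : ZMod 2) * (catalan (n - i) : ZMod 2) := by
    rw [catalan_succ]
    push_cast
    rw [Fin.sum_univ_eq_sum_range (fun i => (catalan i : ZMod 2) * (catalan (n - i) : ZMod 2))]
  rw [h]
  set f : ℕ → ZMod 2 := fun i => (catalan i : ZMod 2) * (catalan (n - i) : ZMod 2) with hf
  have hsym : ∀ i ∈ range (n + 1), f i + f (n - i) = 0 := by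
    intro i hi
    simp only [mem_range] at hi
    have : n - (n - i) = i := by omega
    simp only [hf, this]
    rw [mul_comm]
    exact CharTwo.add_self_eq_zero _
  by_cases hpar : n % 2 = 0
  · have hm : n / 2 ∈ range (n + 1) := by simp only [mem_range]; omega
    rw [if_pos hpar, ← Finset.add_sum_erase _ f hm]
    have hz : ∑ i ∈ (range (n + 1)).erase (n / 2), f i = 0 := by
      apply Finset.sum_involution (fun i _ => n - i)
      · intro a ha
        exact hsym a (Finset.mem_of_mem_erase ha)
      · intro a ha _
        simp only [mem_erase, mem_range] at ha
        omega
      · intro a ha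
        simp only [mem_erase, mem_range] at ha ⊢
        omega
      · intro a ha
        simp only [mem_erase, mem_range] at ha
        omega
    rw [hz, add_zero, hf]
    simp only []
    have : n - n / 2 = n / 2 := by omega
    rw [this, zmod2_mul_self _]
  · rw [if_neg hpar]
    apply Finset.sum_involution (fun i _ => n - i)
    · exact hsym
    · intro a ha _
      simp only [mem_range] at ha
      omega
    · intro a ha
      simp only [mem_range] at ha ⊢
      omega
    · intro a ha
      simp only [mem_range] at ha
      omega

lemma catalan_parity (n : ℕ) : (catalan n : ZMod 2) = 1 ↔ ∃ k, n + 1 = 2 ^ k := by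
  induction n using Nat.strong_induction_on with
  | _ n ih =>
    match n with
    | 0 => simp [catalan_zero]; exact ⟨0, rfl⟩
    | (m + 1) =>
      rw [cat_cast_succ]
      by_cases hpar : m % 2 = 0
      · rw [if_pos hpar, ih (m / 2) (by omega)]
        constructor
        · rintro ⟨k, hk⟩
          exact ⟨k + 1, by omega⟩
        · rintro ⟨k, hk⟩
          match k with
          | 0 => omega
          | (k + 1) =>
            refine ⟨k, ?_⟩
            have : 2 ^ (k + 1) = 2 * 2 ^ k := by ring
            omega
      · rw [if_neg hpar]
        constructor
        · intro h; exact absurd h (by decide : (0 : ZMod 2) ≠ 1)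
        · rintro ⟨k, hk⟩
          match k with
          | 0 => omega
          | (k + 1) =>
            have : 2 ^ (k + 1) = 2 * 2 ^ k := by ring
            omega


open List DyckStep


def toStep : Fin 2 → DyckStep := fun i => if i = 0 then U else D
def toFin : DyckStep → Fin 2 := fun s => match s with | U => 0 | D => 1

lemma toStep_inj : Function.Injective toStep := by decide
lemma toFin_inj : Function.Injective toFin := fun s t h => by cases s <;> cases t <;> simpa [toFin] using h
lemma toFin_toStep : ∀ i, toFin (toStep i) = i := by decide
lemma toStep_toFin : ∀ s, toStep (toFin s) = s := fun s => by cases s <;> rfl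

lemma count_map_toStep (w : List (Fin 2)) (i : Fin 2) :
    (w.map toStep).count (toStep i) = w.count i :=
  List.count_map_of_injective w toStep toStep_inj i

lemma count_map_toFin (l : List DyckStep) (s : DyckStep) :
    (l.map toFin).count (toFin s) = l.count s :=
  List.count_map_of_injective l toFin toFin_inj s

noncomputable def dyckEquiv (n : ℕ) :
    {w : List (Fin 2) // w ∈ Dyck ∧ w.length = n} ≃ {p : DyckWord // p.toList.length = n} where
  toFun x := ⟨⟨x.1.map toStep, by
      have := x.2.1.2
      have h0 : toStep 0 = U := rfl
      have h1 : toStep 1 = D := rfl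
      rw [← h0, ← h1, count_map_toStep, count_map_toStep]
      exact this, by
      intro i
      have h0 : toStep 0 = U := rfl
      have h1 : toStep 1 = D := rfl
      rw [← List.map_take, ← h0, ← h1, count_map_toStep, count_map_toStep]
      exact x.2.1.1 _ (List.take_prefix i x.1)⟩, by
    simpa using x.2.2⟩
  invFun y := ⟨y.1.toList.map toFin, by
      constructor
      · intro q hq
        rw [List.prefix_iff_eq_take] at hq
        rw [hq, ← List.map_take]
        have h0 : toFin U = 0 := rfl
        have h1 : toFin D = 1 := rfl
        rw [← h0, ← h1, count_map_toFin, count_map_toFin]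
        exact y.1.count_D_le_count_U _
      · have h0 : toFin U = 0 := rfl
        have h1 : toFin D = 1 := rfl
        rw [← h0, ← h1, count_map_toFin, count_map_toFin]
        exact y.1.count_U_eq_count_D, by
      simpa using y.2⟩
  left_inv x := by
    ext1
    simp only [List.map_map]
    have : toFin ∘ toStep = id := funext toFin_toStep
    rw [this, List.map_id]
  right_inv y := by
    ext1
    ext1
    simp only [List.map_map]
    have : toStep ∘ toFin = id := funext toStep_toFin
    rw [this, List.map_id]

lemma countFn_dyck_even (n : ℕ) : countFn Dyck (2 * n) = catalan n := by
  have e := Nat.card_congr ((dyckEquiv (2 * n)).trans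
    (Equiv.subtypeEquivRight (q := fun p : DyckWord => p.semilength = n) (fun p => by
      rw [← p.two_mul_semilength_eq_length]
      omega)))
  rw [countFn, ← Nat.card_coe_set_eq]
  exact e.trans (by rw [Nat.card_eq_fintype_card, DyckWord.card_dyckWord_semilength_eq_catalan])

lemma length_eq_counts (w : List (Fin 2)) : w.length = w.count 0 + w.count 1 := by
  induction w with
  | nil => simp
  | cons a t ih =>
    fin_cases a <;> simp [List.count_cons, ih] <;> omega

lemma countFn_dyck_odd (n : ℕ) (hn : Odd n) : countFn Dyck n = 0 := by
  rw [countFn]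
  convert Set.ncard_empty (List (Fin 2))
  ext w
  simp only [Set.mem_setOf_eq, Set.mem_empty_iff_false, iff_false, not_and]
  intro hw hl
  have := length_eq_counts w
  have := hw.2
  obtain ⟨k, hk⟩ := hn
  omega



section DFACount
open scoped Classical

variable {β σ : Type} [Fintype β] [Fintype σ] (M : DFA β σ)

/-- Number of words of length `n` taking state `q` to state `q'`. -/
noncomputable def cnt (n : ℕ) (q q' : σ) : ℕ :=
  Nat.card {w : List β // w.length = n ∧ M.evalFrom q w = q'}

instance finsub (n : ℕ) (P : List β → Prop) : Finite {w : List β // w.length = n ∧ P w} := by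
  have h : {w : List β | w.length = n ∧ P w}.Finite :=
    Set.Finite.subset (List.finite_length_eq β n) (fun w hw => hw.1)
  exact h.to_subtype

lemma cnt_succ (n : ℕ) (q q' : σ) :
    cnt M (n + 1) q q' = ∑ a : β, cnt M n (M.step q a) q' := by
  classical
  have e : {w : List β // w.length = n + 1 ∧ M.evalFrom q w = q'} ≃
      Σ a : β, {w : List β // w.length = n ∧ M.evalFrom (M.step q a) w = q'} :=
    { toFun := fun x => match x with
        | ⟨[], h⟩ => absurd h.1 (by simp)
        | ⟨a :: t, h⟩ => ⟨a, t, by simpa using h.1, h.2⟩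
      invFun := fun y => ⟨y.2.1.cons y.1, by simpa using y.2.2.1, y.2.2.2⟩
      left_inv := fun x => match x with
        | ⟨[], h⟩ => absurd h.1 (by simp)
        | ⟨a :: t, h⟩ => rfl
      right_inv := fun y => rfl }
  haveI : ∀ a : β, Fintype {w : List β // w.length = n ∧ M.evalFrom (M.step q a) w = q'} :=
    fun a => Fintype.ofFinite _
  rw [cnt, Nat.card_congr e, Nat.card_eq_fintype_card, Fintype.card_sigma]
  congr 1
  funext a
  rw [cnt, Nat.card_eq_fintype_card]

lemma countFn_eq_sum (L' : Set (List β)) (hM : ∀ w, w ∈ M.accepts ↔ w ∈ L') (n : ℕ) :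
    countFn L' n = ∑ q' : σ, if q' ∈ M.accept then cnt M n M.start q' else 0 := by
  classical
  have hset : {w : List β | w ∈ L' ∧ w.length = n}
      = {w | w.length = n ∧ M.eval w ∈ M.accept} := by
    ext w
    rw [Set.mem_setOf_eq, Set.mem_setOf_eq, ← hM w, DFA.mem_accepts]
    tauto
  rw [countFn, hset, ← Nat.card_coe_set_eq]
  show Nat.card {w : List β // w.length = n ∧ M.eval w ∈ M.accept} = _
  have e : {w : List β // w.length = n ∧ M.eval w ∈ M.accept} ≃
      Σ q' : σ, {w : List β // (w.length = n ∧ M.evalFrom M.start w = q') ∧ q' ∈ M.accept} :=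
    { toFun := fun x => ⟨M.eval x.1, x.1, ⟨x.2.1, rfl⟩, x.2.2⟩
      invFun := fun y => ⟨y.2.1, y.2.2.1.1, by rw [DFA.eval, y.2.2.1.2]; exact y.2.2.2⟩
      left_inv := fun x => rfl
      right_inv := fun y => by
        obtain ⟨q, w, ⟨⟨h1, rfl⟩, h2⟩⟩ := y
        rfl }
  haveI : ∀ q' : σ, Fintype {w : List β // (w.length = n ∧ M.evalFrom M.start w = q') ∧ q' ∈ M.accept} := by
    intro q'
    have : Finite {w : List β // (w.length = n ∧ M.evalFrom M.start w = q') ∧ q' ∈ M.accept} := by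
      have h : {w : List β | (w.length = n ∧ M.evalFrom M.start w = q') ∧ q' ∈ M.accept}.Finite :=
        Set.Finite.subset (List.finite_length_eq β n) (fun w hw => hw.1.1)
      exact h.to_subtype
    exact Fintype.ofFinite _
  rw [Nat.card_congr e, Nat.card_eq_fintype_card, Fintype.card_sigma]
  congr 1
  funext q'
  by_cases hq : q' ∈ M.accept
  · rw [if_pos hq, cnt]
    haveI : Fintype {w : List β // w.length = n ∧ M.evalFrom M.start w = q'} := Fintype.ofFinite _
    rw [Nat.card_eq_fintype_card]
    exact Fintype.card_congr (Equiv.subtypeEquivRight (fun w => by tauto))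
  · rw [if_neg hq]
    have : IsEmpty {w : List β // (w.length = n ∧ M.evalFrom M.start w = q') ∧ q' ∈ M.accept} :=
      ⟨fun x => hq x.2.2⟩
    simp [Fintype.card_eq_zero]

/-- The mod-2 counting function of a regular language is eventually periodic. -/
lemma regular_parity_periodic (L' : Set (List β)) (hM : ∀ w, w ∈ M.accepts ↔ w ∈ L') :
    ∃ N p, 0 < p ∧ ∀ n, N ≤ n → ((countFn L' (n + p) : ZMod 2)) = countFn L' n := by
  classical
  set V : ℕ → (σ → σ → ZMod 2) := fun n q q' => (cnt M n q q' : ZMod 2) with hV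
  set T : (σ → σ → ZMod 2) → (σ → σ → ZMod 2) :=
    fun v q q' => ∑ a : β, v (M.step q a) q' with hT
  have hstep : ∀ n, V (n + 1) = T (V n) := by
    intro n
    funext q q'
    simp only [hV, hT, cnt_succ M n q q']
    push_cast
    rfl
  have key : ∀ i p, 0 < p → V (i + p) = V i → ∀ k, V (i + k + p) = V (i + k) := by
    intro i p hp h0 k
    induction k with
    | zero => simpa using h0
    | succ k ih =>
      have e1 : i + (k + 1) + p = (i + k + p) + 1 := by ring
      have e2 : i + (k + 1) = (i + k) + 1 := by ring
      rw [e1, e2, hstep, hstep, ih]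
  have main : ∃ i p, 0 < p ∧ V (i + p) = V i := by
    obtain ⟨i, j, hij, hV2⟩ := Finite.exists_ne_map_eq_of_infinite V
    rcases Nat.lt_or_ge i j with hlt | hge
    · exact ⟨i, j - i, by omega, by rw [show i + (j - i) = j by omega]; exact hV2.symm⟩
    · have hlt : j < i := by omega
      exact ⟨j, i - j, by omega, by rw [show j + (i - j) = i by omega]; exact hV2⟩
  obtain ⟨N, p, hp, hper⟩ := main
  refine ⟨N, p, hp, fun n hn => ?_⟩
  have hVn : V (n + p) = V n := by
    have := key N p hp hper (n - N)
    rwa [show N + (n - N) + p = n + p by omega, show N + (n - N) = n by omega] at this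
  have hcount : ∀ m, (countFn L' m : ZMod 2)
      = ∑ q' : σ, (if q' ∈ M.accept then V m M.start q' else 0) := by
    intro m
    rw [countFn_eq_sum M L' hM m, Nat.cast_sum]
    refine Finset.sum_congr rfl fun q' _ => ?_
    split
    · rfl
    · simp
  rw [hcount, hcount, hVn]

end DFACount


/-- The Dyck language is not counting-regular; its counting function is the `n`-th Catalan
number at length `2n` and `0` at odd lengths. -/
theorem stmt17 :
    (∀ n, countFn Dyck (2 * n) = catalan n) ∧ (∀ n, Odd n → countFn Dyck n = 0) ∧
    ¬ CountingRegular Dyck := by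
  refine ⟨countFn_dyck_even, countFn_dyck_odd, ?_⟩
  rintro ⟨β, hβ, L', ⟨σ, hσ, M, hM⟩, hcnt⟩
  haveI := hβ
  haveI := hσ
  obtain ⟨N, p, hp, hper⟩ := regular_parity_periodic M L' hM
  have hper' : ∀ n, N ≤ n → ((countFn Dyck (n + p) : ZMod 2)) = countFn Dyck n := by
    intro n hn
    have := hper n hn
    rwa [hcnt, hcnt] at this
  -- if the parity of countFn Dyck at m is 1, then m + 2 is a power of 2
  have hone : ∀ m, (countFn Dyck m : ZMod 2) = 1 → ∃ a, m + 2 = 2 ^ a := by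
    intro m hm
    rcases Nat.even_or_odd m with he | ho
    · obtain ⟨r, hr⟩ := he
      rw [show m = 2 * r by omega, countFn_dyck_even r] at hm
      obtain ⟨k, hk⟩ := (catalan_parity r).mp hm
      refine ⟨k + 1, ?_⟩
      have : 2 ^ (k + 1) = 2 * 2 ^ k := by ring
      omega
    · rw [countFn_dyck_odd m ho] at hm
      norm_num at hm
  -- the starting point
  set m₀ := 2 * (2 ^ N - 1) with hm₀
  have hNle : N ≤ m₀ := by
    have := Nat.lt_two_pow_self (n := N)
    omega
  have h2N : (2 ^ N - 1) + 1 = 2 ^ N := by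
    have := Nat.one_le_two_pow (n := N)
    omega
  have h0 : (countFn Dyck m₀ : ZMod 2) = 1 := by
    rw [hm₀, countFn_dyck_even]
    exact (catalan_parity _).mpr ⟨N, h2N⟩
  have h1 : (countFn Dyck (m₀ + p) : ZMod 2) = 1 := by
    rw [hper' m₀ hNle]; exact h0
  have h2 : (countFn Dyck (m₀ + 2 * p) : ZMod 2) = 1 := by
    have := hper' (m₀ + p) (by omega)
    rw [show m₀ + p + p = m₀ + 2 * p by ring] at this
    rw [this]; exact h1
  obtain ⟨A, hA⟩ := hone _ h0
  obtain ⟨B, hB⟩ := hone _ h1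
  obtain ⟨C, hC⟩ := hone _ h2
  have hAB : A < B := by
    have : (2:ℕ) ^ A < 2 ^ B := by omega
    exact (Nat.pow_lt_pow_iff_right (by norm_num)).mp this
  have hBC : B < C := by
    have : (2:ℕ) ^ B < 2 ^ C := by omega
    exact (Nat.pow_lt_pow_iff_right (by norm_num)).mp this
  have e1 : (2:ℕ) ^ (B + 1) ≤ 2 ^ C := Nat.pow_le_pow_right (by norm_num) (by omega)
  have e2 : (2:ℕ) ^ (B + 1) = 2 * 2 ^ B := by ring
  have e3 : (0:ℕ) < 2 ^ A := Nat.pow_pos (n := A) (by norm_num)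
  omega
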